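/- Suppose u : [0,D] → ℝ is continuous and satisfies u(x) = (L(x,x)/λ₃(x)) · (w(x) + κ(π₁(x))) − ∫₀ˣ L(x,y) · g(x−y, π₂(y)) / λ₃(y) dy for all x ∈ [0,D], where π₂(y) := (w(y) + κ(π₁(y))) / λ₃(y), w : [0,D] → ℝ is continuous, π₁ : [0,D] → ℝⁿ is continuous with sup_{x∈[0,D]} |π₁(x)| ≤ P, λ₃ : [0,D] → ℝ satisfies λ₃(y) ≥ ε > 0, L is continuous on the triangle {(x,y) : 0 ≤ y ≤ x ≤ D} with |L(x,y)| ≤ L̄, κ : ℝⁿ → ℝ satisfies |κ(ξ)| ≤ ρ(|ξ|) for all ξ, and g : [0,D] × ℝ → ℝ is continuous with |g(x,v)| ≤ Lg·|v|. Then sup_{x∈[0,D]} |u(x)| ≤ (L̄/ε) · (1 + D·Lg/ε) · ( sup_{x∈[0,D]} |w(x)| + ρ(P) ). -/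

import Mathlib

open Set

/-- A class `K∞` function: continuous, strictly increasing, unbounded on `[0,∞)` with `σ 0 = 0`. -/
def IsKInf (σ : ℝ → ℝ) : Prop :=
  ContinuousOn σ (Set.Ici 0) ∧ StrictMonoOn σ (Set.Ici 0) ∧ σ 0 = 0 ∧
  ∀ M : ℝ, ∃ s : ℝ, 0 ≤ s ∧ M < σ s

/-- Direct estimate on the inverse backstepping transform. -/
theorem stmt3
    (n : ℕ) (D ε Lbar Lg P : ℝ) (hD : 0 < D) (hε : 0 < ε)
    (hLbar : 0 ≤ Lbar) (hLg : 0 ≤ Lg) (hP : 0 ≤ P)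
    (ρ : ℝ → ℝ) (hρ : IsKInf ρ)
    (u w lam₃ : ℝ → ℝ) (π₁ : ℝ → EuclideanSpace ℝ (Fin n))
    (L : ℝ → ℝ → ℝ) (κ : EuclideanSpace ℝ (Fin n) → ℝ) (g : ℝ → ℝ → ℝ)
    (hu : ContinuousOn u (Icc (0:ℝ) D))
    (hw : ContinuousOn w (Icc (0:ℝ) D))
    (hπ₁c : ContinuousOn π₁ (Icc (0:ℝ) D))
    (hπ₁ : ∀ x ∈ Icc (0:ℝ) D, ‖π₁ x‖ ≤ P)
    (hlam : ∀ y ∈ Icc (0:ℝ) D, ε ≤ lam₃ y)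
    (hL : ContinuousOn (fun q : ℝ × ℝ => L q.1 q.2)
      {q : ℝ × ℝ | 0 ≤ q.2 ∧ q.2 ≤ q.1 ∧ q.1 ≤ D})
    (hLbd : ∀ x y : ℝ, 0 ≤ y → y ≤ x → x ≤ D → |L x y| ≤ Lbar)
    (hκ : ∀ ξ : EuclideanSpace ℝ (Fin n), |κ ξ| ≤ ρ ‖ξ‖)
    (hg : Continuous fun q : ℝ × ℝ => g q.1 q.2)
    (hgbd : ∀ x ∈ Icc (0:ℝ) D, ∀ v : ℝ, |g x v| ≤ Lg * |v|)
    (heq : ∀ x ∈ Icc (0:ℝ) D,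
      u x = (L x x / lam₃ x) * (w x + κ (π₁ x)) -
        ∫ y in (0:ℝ)..x, L x y * g (x - y) ((w y + κ (π₁ y)) / lam₃ y) / lam₃ y) :
    (⨆ x : Icc (0:ℝ) D, |u x|) ≤
      (Lbar / ε) * (1 + D * Lg / ε) *
        ((⨆ x : Icc (0:ℝ) D, |w x|) + ρ P) := by

  have hne : Nonempty (Icc (0:ℝ) D) := ⟨⟨0, le_refl 0, hD.le⟩⟩
  obtain ⟨C, hC⟩ := isCompact_Icc.exists_bound_of_continuousOn hw
  have hbdd : BddAbove (Set.range fun x : Icc (0:ℝ) D => |w x.1|) := by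
    refine ⟨C, ?_⟩
    rintro _ ⟨x, rfl⟩
    simpa using hC x x.2
  set W := ⨆ x : Icc (0:ℝ) D, |w x.1| with hWdef
  have hwle : ∀ x ∈ Icc (0:ℝ) D, |w x| ≤ W := fun x hx => le_ciSup hbdd ⟨x, hx⟩
  have hmono := hρ.2.1.monotoneOn
  have hρP : 0 ≤ ρ P := by
    have := hmono (Set.self_mem_Ici) (Set.mem_Ici.2 hP) hP
    rw [hρ.2.2.1] at this
    exact this
  have hW0 : 0 ≤ W := le_trans (abs_nonneg _) (hwle 0 ⟨le_refl 0, hD.le⟩)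
  have hWρ : 0 ≤ W + ρ P := by linarith
  have hκρ : ∀ y ∈ Icc (0:ℝ) D, |κ (π₁ y)| ≤ ρ P := by
    intro y hy
    refine le_trans (hκ _) (hmono (Set.mem_Ici.2 (norm_nonneg _))
      (Set.mem_Ici.2 hP) (hπ₁ y hy))
  have hsum : ∀ y ∈ Icc (0:ℝ) D, |w y + κ (π₁ y)| ≤ W + ρ P := by
    intro y hy
    calc |w y + κ (π₁ y)| ≤ |w y| + |κ (π₁ y)| := abs_add_le _ _
      _ ≤ W + ρ P := add_le_add (hwle y hy) (hκρ y hy)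
  have hlamabs : ∀ y ∈ Icc (0:ℝ) D, ε ≤ |lam₃ y| :=
    fun y hy => le_trans (hlam y hy) (le_abs_self _)
  have key : ∀ x ∈ Icc (0:ℝ) D, |u x| ≤
      (Lbar / ε) * (1 + D * Lg / ε) * (W + ρ P) := by
    intro x hx
    rw [heq x hx]
    have hx0 : (0:ℝ) ≤ x := hx.1
    have hxD : x ≤ D := hx.2
    have hA : |(L x x / lam₃ x) * (w x + κ (π₁ x))| ≤ (Lbar / ε) * (W + ρ P) := by
      rw [abs_mul, abs_div]
      refine mul_le_mul ?_ (hsum x hx) (abs_nonneg _) (div_nonneg hLbar hε.le)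
      exact div_le_div₀ hLbar (hLbd x x hx0 le_rfl hxD) hε (hlamabs x hx)
    have hB : |∫ y in (0:ℝ)..x, L x y * g (x - y) ((w y + κ (π₁ y)) / lam₃ y) / lam₃ y|
        ≤ (Lbar * (Lg * ((W + ρ P) / ε)) / ε) * x := by
      have := intervalIntegral.norm_integral_le_of_norm_le_const
        (C := Lbar * (Lg * ((W + ρ P) / ε)) / ε)
        (f := fun y => L x y * g (x - y) ((w y + κ (π₁ y)) / lam₃ y) / lam₃ y)
        (a := (0:ℝ)) (b := x) ?_
      · simpa [abs_of_nonneg hx0] using this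
      · intro y hy
        rw [Set.uIoc_of_le hx0] at hy
        have hyD : y ∈ Icc (0:ℝ) D := ⟨hy.1.le, le_trans hy.2 hxD⟩
        have hxy : x - y ∈ Icc (0:ℝ) D := ⟨by linarith [hy.2], by linarith [hy.1]⟩
        have hv : |(w y + κ (π₁ y)) / lam₃ y| ≤ (W + ρ P) / ε := by
          rw [abs_div]
          exact div_le_div₀ hWρ (hsum y hyD) hε (hlamabs y hyD)
        have hgv : |g (x - y) ((w y + κ (π₁ y)) / lam₃ y)| ≤ Lg * ((W + ρ P) / ε) :=
          le_trans (hgbd _ hxy _) (mul_le_mul_of_nonneg_left hv hLg)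
        have : |L x y * g (x - y) ((w y + κ (π₁ y)) / lam₃ y) / lam₃ y|
            ≤ Lbar * (Lg * ((W + ρ P) / ε)) / ε := by
          rw [abs_div, abs_mul]
          refine div_le_div₀ (by positivity) ?_ hε (hlamabs y hyD)
          exact mul_le_mul (hLbd x y hy.1.le hy.2 hxD) hgv (abs_nonneg _) hLbar
        simpa only [Real.norm_eq_abs] using this
    calc |(L x x / lam₃ x) * (w x + κ (π₁ x)) -
          ∫ y in (0:ℝ)..x, L x y * g (x - y) ((w y + κ (π₁ y)) / lam₃ y) / lam₃ y|
        ≤ |(L x x / lam₃ x) * (w x + κ (π₁ x))| +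
          |∫ y in (0:ℝ)..x, L x y * g (x - y) ((w y + κ (π₁ y)) / lam₃ y) / lam₃ y| :=
          abs_sub _ _
      _ ≤ (Lbar / ε) * (W + ρ P) + (Lbar * (Lg * ((W + ρ P) / ε)) / ε) * x :=
          add_le_add hA hB
      _ ≤ (Lbar / ε) * (1 + D * Lg / ε) * (W + ρ P) := by
          have hx' : (Lbar * (Lg * ((W + ρ P) / ε)) / ε) * x
              ≤ (Lbar * (Lg * ((W + ρ P) / ε)) / ε) * D :=
            mul_le_mul_of_nonneg_left hxD (by positivity)
          have heq' : (Lbar / ε) * (1 + D * Lg / ε) * (W + ρ P)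
              = (Lbar / ε) * (W + ρ P) + (Lbar * (Lg * ((W + ρ P) / ε)) / ε) * D := by
            field_simp
          rw [heq']
          linarith
  exact ciSup_le fun x => key x x.2
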